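/- Let λ > 0 and suppose h : J → ℝ is C¹ with |h'| ≤ e^{−λn} on an interval J, and ρ : h(J) → ℂ satisfies H(ρ) ≤ a. Suppose also H(h') ≤ D, i.e., |h'(x)|/|h'(y)| ≤ e^{D|x−y|^α}. Then the function ρ̃ = (ρ∘h)·h' satisfies H(ρ̃) ≤ D + e^{−λαn}·a. -/

import Mathlib

theorem stmt_13 (α a D lam : ℝ) (n : ℕ) (J : Set ℝ) (h h' : ℝ → ℝ) (ρ : ℝ → ℂ)
    (hα : α ∈ Set.Ioo (0:ℝ) 1) (ha : 0 < a) (hD : 0 ≤ D) (hlam : 0 < lam)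
    (hderiv : ∀ x ∈ J, HasDerivAt h (h' x) x)
    (hne : ∀ x ∈ J, h' x ≠ 0)
    (hbd : ∀ x ∈ J, |h' x| ≤ Real.exp (-lam * n))
    (hcontr : ∀ x ∈ J, ∀ y ∈ J, |h x - h y| ≤ Real.exp (-lam * n) * |x - y|)
    (hdist : ∀ x ∈ J, ∀ y ∈ J, |h' x| ≤ Real.exp (D * |x - y| ^ α) * |h' y|)
    (hρne : ∀ u ∈ h '' J, ρ u ≠ 0)
    (hρH : ∀ u ∈ h '' J, ∀ v ∈ h '' J,
      |Real.log (‖ρ u‖) - Real.log (‖ρ v‖)| ≤ a * |u - v| ^ α) :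
    ∀ x ∈ J, ∀ y ∈ J,
      |Real.log (‖ρ (h x)‖ * |h' x|) - Real.log (‖ρ (h y)‖ * |h' y|)|
        ≤ (D + Real.exp (-lam * α * n) * a) * |x - y| ^ α := by
  intro x hx y hy
  obtain ⟨hα0, hα1⟩ := hα
  have hρx : ‖ρ (h x)‖ ≠ 0 := by
    simpa using hρne (h x) ⟨x, hx, rfl⟩
  have hρy : ‖ρ (h y)‖ ≠ 0 := by
    simpa using hρne (h y) ⟨y, hy, rfl⟩
  have hhx : |h' x| ≠ 0 := abs_ne_zero.mpr (hne x hx)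
  have hhy : |h' y| ≠ 0 := abs_ne_zero.mpr (hne y hy)
  rw [Real.log_mul hρx hhx, Real.log_mul hρy hhy]
  have key : ∀ u ∈ J, ∀ v ∈ J,
      Real.log |h' u| - Real.log |h' v| ≤ D * |u - v| ^ α := by
    intro u hu v hv
    have h1 : |h' u| ≤ Real.exp (D * |u - v| ^ α) * |h' v| := hdist u hu v hv
    have h2 : Real.log |h' u| ≤ Real.log (Real.exp (D * |u - v| ^ α) * |h' v|) :=
      Real.log_le_log (abs_pos.mpr (hne u hu)) h1
    rw [Real.log_mul (Real.exp_ne_zero _) (abs_ne_zero.mpr (hne v hv)),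
      Real.log_exp] at h2
    linarith
  have hderiv_abs : abs (Real.log |h' x| - Real.log |h' y|) ≤ D * |x - y| ^ α := by
    rw [abs_sub_le_iff]
    constructor
    · exact key x hx y hy
    · have := key y hy x hx
      rwa [abs_sub_comm] at this
  have hρ_abs : |Real.log (‖ρ (h x)‖) - Real.log (‖ρ (h y)‖)|
      ≤ Real.exp (-lam * α * n) * a * |x - y| ^ α := by
    have h1 := hρH (h x) ⟨x, hx, rfl⟩ (h y) ⟨y, hy, rfl⟩
    have h2 : |h x - h y| ^ α ≤ (Real.exp (-lam * n) * |x - y|) ^ α := by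
      apply Real.rpow_le_rpow (abs_nonneg _) (hcontr x hx y hy) hα0.le
    have h3 : (Real.exp (-lam * n) * |x - y|) ^ α
        = Real.exp (-lam * α * n) * |x - y| ^ α := by
      rw [Real.mul_rpow (Real.exp_nonneg _) (abs_nonneg _), ← Real.exp_mul]
      ring_nf
    calc |Real.log (‖ρ (h x)‖) - Real.log (‖ρ (h y)‖)|
        ≤ a * |h x - h y| ^ α := h1
      _ ≤ a * (Real.exp (-lam * α * n) * |x - y| ^ α) := by
          rw [← h3]; exact mul_le_mul_of_nonneg_left h2 ha.le
      _ = Real.exp (-lam * α * n) * a * |x - y| ^ α := by ring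
  calc |Real.log (‖ρ (h x)‖) + Real.log |h' x|
        - (Real.log (‖ρ (h y)‖) + Real.log |h' y|)|
      ≤ |Real.log (‖ρ (h x)‖) - Real.log (‖ρ (h y)‖)|
        + abs (Real.log |h' x| - Real.log |h' y|) := by
        rw [show Real.log (‖ρ (h x)‖) + Real.log |h' x|
            - (Real.log (‖ρ (h y)‖) + Real.log |h' y|)
            = (Real.log (‖ρ (h x)‖) - Real.log (‖ρ (h y)‖))
            + (Real.log |h' x| - Real.log |h' y|) by ring]
        exact abs_add_le _ _
    _ ≤ Real.exp (-lam * α * n) * a * |x - y| ^ α + D * |x - y| ^ α := by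
        linarith
    _ = (D + Real.exp (-lam * α * n) * a) * |x - y| ^ α := by ring
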